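/- For any γ ≥ 0 there is a constant C such that for all x, y ∈ ℝ² and any fixed ε ∈ (0, 1/2): ∫_{ℝ²} (|x - y₁|^{-ε} + ⟨x - y₁⟩^γ) ⟨y₁⟩^{-2-2γ-ε} (|y₁ - y|^γ + |y₁ - y|^{-1}) dy₁ ≤ C ⟨x⟩^γ ⟨y⟩^γ. -/

import Mathlib

open MeasureTheory Metric Set

local notation "E2" => EuclideanSpace ℝ (Fin 2)

lemma young_aux {a b : ℝ} (ha : 0 ≤ a) (hb : 0 ≤ b) :
    a * b ≤ a ^ (3:ℝ) + b ^ ((3:ℝ)/2) := by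
  rcases le_or_gt a (b ^ ((1:ℝ)/2)) with h | h
  · calc a * b ≤ b ^ ((1:ℝ)/2) * b := mul_le_mul_of_nonneg_right h hb
      _ = b ^ ((1:ℝ)/2) * b ^ (1:ℝ) := by rw [Real.rpow_one]
      _ = b ^ ((3:ℝ)/2) := by rw [← Real.rpow_add' hb (by norm_num)]; norm_num
      _ ≤ a ^ (3:ℝ) + b ^ ((3:ℝ)/2) := le_add_of_nonneg_left (Real.rpow_nonneg ha _)
  · have hb2 : b < a ^ (2:ℝ) := by
      have h' := Real.rpow_lt_rpow (Real.rpow_nonneg hb _) h (by norm_num : (0:ℝ) < 2)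
      have hsq : (b ^ ((1:ℝ)/2)) ^ (2:ℝ) = b := by
        rw [← Real.rpow_mul hb]; norm_num
      rwa [hsq] at h'
    calc a * b ≤ a * a ^ (2:ℝ) := mul_le_mul_of_nonneg_left hb2.le ha
      _ = a ^ (1:ℝ) * a ^ (2:ℝ) := by rw [Real.rpow_one]
      _ = a ^ (3:ℝ) := by rw [← Real.rpow_add' ha (by norm_num)]; norm_num
      _ ≤ a ^ (3:ℝ) + b ^ ((3:ℝ)/2) := le_add_of_nonneg_right (Real.rpow_nonneg hb _)

lemma pow_rpow_comm {x : ℝ} (hx : 0 ≤ x) (c : ℝ) (n : ℕ) :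
    (x ^ n) ^ c = (x ^ c) ^ n := by
  rw [← Real.rpow_natCast x n, ← Real.rpow_mul hx, mul_comm, Real.rpow_mul hx,
    Real.rpow_natCast]

lemma integrableOn_rpow_neg_ball {a : ℝ} (h0 : 0 < a) (h2 : a < 2) :
    IntegrableOn (fun z : E2 => ‖z‖ ^ (-a)) (ball (0:E2) 1) volume := by
  set f : E2 → ℝ := fun z => ‖z‖ ^ (-a) with hfdef
  have hmeas : Measurable f := measurable_norm.pow_const (-a)
  set S : ℕ → Set E2 := fun n => ball (0:E2) ((1/2:ℝ)^n) \ ball (0:E2) ((1/2:ℝ)^(n+1))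
    with hSdef
  have hS : ∀ n, MeasurableSet (S n) := fun n => measurableSet_ball.diff measurableSet_ball
  have hfin : ∀ n, volume (S n) < ⊤ := fun n =>
    (measure_mono diff_subset).trans_lt measure_ball_lt_top
  have hbound : ∀ n, ∀ z ∈ S n, f z ≤ ((1/2:ℝ)^(n+1)) ^ (-a) := by
    intro n z hz
    have h1 : (1/2:ℝ)^(n+1) ≤ ‖z‖ := by
      have := hz.2
      rw [mem_ball_zero_iff] at this
      push_neg at this
      exact this
    exact Real.rpow_le_rpow_of_nonpos (by positivity) h1 (by linarith)
  have hf_nonneg : ∀ z, 0 ≤ f z := fun z => Real.rpow_nonneg (norm_nonneg z) _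
  have hInt : ∀ n, IntegrableOn f (S n) volume := by
    intro n
    apply Measure.integrableOn_of_bounded (hfin n).ne hmeas.aestronglyMeasurable
      (M := ((1/2:ℝ)^(n+1)) ^ (-a))
    filter_upwards [ae_restrict_mem (hS n)] with z hz
    rw [Real.norm_of_nonneg (hf_nonneg z)]
    exact hbound n z hz
  set B : ℝ := (volume (ball (0:E2) 1)).toReal with hBdef
  have hB : 0 ≤ B := ENNReal.toReal_nonneg
  set r1 : ℝ := (1/2:ℝ) ^ (-a) with hr1def
  have hr1 : 0 < r1 := Real.rpow_pos_of_pos (by norm_num) _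
  set q : ℝ := r1 * (1/4 : ℝ) with hqdef
  have hq0 : 0 ≤ q := by positivity
  have hq1 : q < 1 := by
    have h14 : r1 < 4 := by
      have : r1 = (2:ℝ) ^ a := by
        rw [hr1def, one_div, Real.inv_rpow (by norm_num : (0:ℝ) ≤ 2),
          ← Real.rpow_neg (by norm_num : (0:ℝ) ≤ 2), neg_neg]
      rw [this]
      calc (2:ℝ) ^ a < (2:ℝ) ^ (2:ℝ) :=
            Real.rpow_lt_rpow_of_exponent_lt one_lt_two h2
        _ = 4 := by
            rw [show ((2:ℝ):ℝ) = ((2:ℕ):ℝ) by norm_num, Real.rpow_natCast]; norm_num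
    calc q = r1 * (1/4) := hqdef
      _ < 4 * (1/4) := by nlinarith
      _ = 1 := by norm_num
  have hvol : ∀ n, (volume (S n)).toReal ≤ ((1/2:ℝ)^n)^2 * B := by
    intro n
    have h1 : volume (S n) ≤ volume (ball (0:E2) ((1/2:ℝ)^n)) := measure_mono diff_subset
    have h2' : volume (ball (0:E2) ((1/2:ℝ)^n)) =
        ENNReal.ofReal (((1/2:ℝ)^n) ^ Module.finrank ℝ E2) * volume (ball (0:E2) 1) :=
      Measure.addHaar_ball volume _ (by positivity)
    have hrk : Module.finrank ℝ E2 = 2 := by simp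
    calc (volume (S n)).toReal ≤ (volume (ball (0:E2) ((1/2:ℝ)^n))).toReal :=
          ENNReal.toReal_mono measure_ball_lt_top.ne h1
      _ = ((1/2:ℝ)^n)^2 * B := by
          rw [h2', hrk, ENNReal.toReal_mul, ENNReal.toReal_ofReal (by positivity)]
  have hsum : Summable fun n : ℕ => ∫ z in S n, ‖f z‖ := by
    refine Summable.of_nonneg_of_le
      (fun n => setIntegral_nonneg (hS n) (fun z _ => norm_nonneg _))
      (fun n => ?_) ((summable_geometric_of_lt_one hq0 hq1).mul_left (r1 * B))
    · have step1 : (∫ z in S n, ‖f z‖) ≤ (∫ _ in S n, ((1/2:ℝ)^(n+1)) ^ (-a)) := by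
        apply setIntegral_mono_on ((hInt n).norm)
          (integrableOn_const (hfin n).ne) (hS n)
        intro z hz
        rw [Real.norm_of_nonneg (hf_nonneg z)]
        exact hbound n z hz
      have step2 : (∫ _ in S n, ((1/2:ℝ)^(n+1)) ^ (-a) ∂volume)
          = (volume (S n)).toReal * ((1/2:ℝ)^(n+1)) ^ (-a) := by
        rw [setIntegral_const]; rfl
      have key : (volume (S n)).toReal * ((1/2:ℝ)^(n+1)) ^ (-a) ≤ (r1 * B) * q ^ n := by
        have hMn : ((1/2:ℝ)^(n+1)) ^ (-a) = r1 ^ (n+1) := by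
          rw [pow_rpow_comm (by norm_num) (-a) (n+1), hr1def]
        have := mul_le_mul_of_nonneg_right (hvol n)
          (by positivity : (0:ℝ) ≤ ((1/2:ℝ)^(n+1)) ^ (-a))
        refine this.trans (le_of_eq ?_)
        have h14n : ((1/2:ℝ)^n)^2 = (1/4:ℝ)^n := by
          rw [← pow_mul, mul_comm, pow_mul]; norm_num
        rw [hMn, h14n, hqdef, mul_pow, pow_succ]
        ring
      linarith [step1, step2 ▸ key]
  have hU : IntegrableOn f (⋃ n, S n) volume :=
    integrableOn_iUnion_of_summable_integral_norm hInt hsum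
  have h0' : IntegrableOn f ({0} : Set E2) volume := by
    rw [IntegrableOn, Measure.restrict_eq_zero.mpr (measure_singleton 0)]
    exact integrable_zero_measure
  refine (hU.union h0').mono_set ?_
  intro z hz
  rw [mem_ball_zero_iff] at hz
  by_cases hz0 : z = 0
  · exact Or.inr (by simp [hz0])
  · left
    have hzpos : 0 < ‖z‖ := norm_pos_iff.mpr hz0
    have hex : ∃ n : ℕ, (1/2:ℝ)^(n+1) ≤ ‖z‖ := by
      obtain ⟨n, hn⟩ := exists_pow_lt_of_lt_one hzpos (by norm_num : (1/2:ℝ) < 1)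
      exact ⟨n, le_trans (pow_le_pow_of_le_one (by norm_num) (by norm_num) (Nat.le_succ n)) hn.le⟩
    classical
    set N := Nat.find hex with hNdef
    have hN : (1/2:ℝ)^(N+1) ≤ ‖z‖ := Nat.find_spec hex
    have hNlt : ‖z‖ < (1/2:ℝ)^N := by
      rcases Nat.eq_zero_or_pos N with h | h
      · rw [h]; simpa using hz
      · have hm : N - 1 < N := Nat.sub_lt h one_pos
        have h' := Nat.find_min hex hm
        push_neg at h'
        have h'' : ‖z‖ < (1/2:ℝ)^(N-1+1) := h'
        rwa [Nat.sub_add_cancel h] at h''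
    refine mem_iUnion.mpr ⟨N, ?_⟩
    constructor
    · rw [mem_ball_zero_iff]; exact hNlt
    · rw [mem_ball_zero_iff]; push_neg; exact hN

/-- The basic singular bump: `‖z‖ ^ (-a)` cut off to the unit ball. -/
noncomputable def F0 (a : ℝ) (z : E2) : ℝ :=
  Set.indicator (ball (0:E2) 1) (fun w => ‖w‖ ^ (-a)) z

lemma F0_nonneg (a : ℝ) (z : E2) : 0 ≤ F0 a z :=
  Set.indicator_nonneg (fun w _ => Real.rpow_nonneg (norm_nonneg w) _) z

lemma F0_integrable {a : ℝ} (h0 : 0 < a) (h2 : a < 2) : Integrable (F0 a) volume :=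
  (integrableOn_rpow_neg_ball h0 h2).integrable_indicator measurableSet_ball

lemma kernel_le {a : ℝ} (h0 : 0 < a) (c z : E2) :
    ‖z - c‖ ^ (-a) ≤ 1 + F0 a (z - c) := by
  by_cases h : ‖z - c‖ < 1
  · have hm : z - c ∈ ball (0:E2) 1 := mem_ball_zero_iff.mpr h
    rw [F0, Set.indicator_of_mem hm]
    linarith [Real.rpow_nonneg (norm_nonneg (z - c)) (-a)]
  · rw [F0, Set.indicator_of_notMem (by simpa [mem_ball_zero_iff] using h)]
    have h1 : ‖z - c‖ ^ (-a) ≤ 1 :=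
      Real.rpow_le_one_of_one_le_of_nonpos (not_lt.mp h) (by linarith)
    linarith [h1, F0_nonneg a (z - c)]

lemma F0_rpow (a : ℝ) {b : ℝ} (hb : b ≠ 0) (z : E2) :
    (F0 a z) ^ b = F0 (a * b) z := by
  by_cases h : z ∈ ball (0:E2) 1
  · rw [F0, F0, Set.indicator_of_mem h, Set.indicator_of_mem h,
      ← Real.rpow_mul (norm_nonneg z)]
    ring_nf
  · rw [F0, F0, Set.indicator_of_notMem h, Set.indicator_of_notMem h,
      Real.zero_rpow hb]

set_option maxHeartbeats 1000000 in
theorem weighted_spatial_estimate (γ ε : ℝ) (hγ : 0 ≤ γ) (hε0 : 0 < ε) (hε : ε < 1/2) :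
    ∃ C : ℝ, ∀ x y : EuclideanSpace ℝ (Fin 2),
      (∫ y1 : EuclideanSpace ℝ (Fin 2),
        (‖x - y1‖ ^ (-ε) + (1 + ‖x - y1‖) ^ γ) * (1 + ‖y1‖) ^ (-(2 + 2*γ + ε)) *
          (‖y1 - y‖ ^ γ + ‖y1 - y‖ ^ (-(1:ℝ))))
      ≤ C * (1 + ‖x‖) ^ γ * (1 + ‖y‖) ^ γ := by
  have hG1 : Integrable (fun z : E2 => (1 + ‖z‖) ^ (-(2 + ε))) volume := by
    apply integrable_one_add_norm
    have hrk : Module.finrank ℝ E2 = 2 := by simp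
    rw [hrk]; push_cast; linarith
  have hIε : Integrable (F0 ε) volume := F0_integrable hε0 (by linarith)
  have hI1 : Integrable (F0 1) volume := F0_integrable one_pos one_lt_two
  have hIε3 : Integrable (F0 (ε*3)) volume := F0_integrable (by linarith) (by linarith)
  have hI32 : Integrable (F0 (1*(3/2))) volume :=
    F0_integrable (by norm_num) (by norm_num)
  refine ⟨4*(∫ z : E2, (1 + ‖z‖) ^ (-(2 + ε))) + 2*(∫ z : E2, F0 ε z) + 2*(∫ z : E2, F0 1 z)
      + (∫ z : E2, F0 (ε*3) z) + (∫ z : E2, F0 (1*(3/2)) z), ?_⟩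
  intro x y
  set Px : ℝ := (1 + ‖x‖) ^ γ with hPxdef
  set Py : ℝ := (1 + ‖y‖) ^ γ with hPydef
  have hPx1 : (1:ℝ) ≤ Px := Real.one_le_rpow (by linarith [norm_nonneg x]) hγ
  have hPy1 : (1:ℝ) ≤ Py := Real.one_le_rpow (by linarith [norm_nonneg y]) hγ
  set M : E2 → ℝ := fun y1 => Px * Py *
    (4*(1 + ‖y1‖) ^ (-(2 + ε)) + 2*F0 ε (y1 - x) + 2*F0 1 (y1 - y)
      + F0 (ε*3) (y1 - x) + F0 (1*(3/2)) (y1 - y)) with hMdef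
  -- integrability of the majorant
  have hx1 : Integrable (fun y1 : E2 => F0 ε (y1 - x)) volume := hIε.comp_sub_right x
  have hy1i : Integrable (fun y1 : E2 => F0 1 (y1 - y)) volume := hI1.comp_sub_right y
  have hx2 : Integrable (fun y1 : E2 => F0 (ε*3) (y1 - x)) volume := hIε3.comp_sub_right x
  have hy2 : Integrable (fun y1 : E2 => F0 (1*(3/2)) (y1 - y)) volume := hI32.comp_sub_right y
  have hInner : Integrable (fun y1 : E2 =>
      4*(1 + ‖y1‖) ^ (-(2 + ε)) + 2*F0 ε (y1 - x) + 2*F0 1 (y1 - y)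
        + F0 (ε*3) (y1 - x) + F0 (1*(3/2)) (y1 - y)) volume :=
    ((((hG1.const_mul 4).add (hx1.const_mul 2)).add (hy1i.const_mul 2)).add hx2).add hy2
  have hM : Integrable M volume := by
    simp only [hMdef]
    exact hInner.const_mul _
  -- pointwise bound
  have ptwise : ∀ y1 : E2,
      (‖x - y1‖ ^ (-ε) + (1 + ‖x - y1‖) ^ γ) * (1 + ‖y1‖) ^ (-(2 + 2*γ + ε)) *
          (‖y1 - y‖ ^ γ + ‖y1 - y‖ ^ (-(1:ℝ))) ≤ M y1 := by
    intro y1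
    set Q : ℝ := (1 + ‖y1‖) ^ γ with hQdef
    set W : ℝ := (1 + ‖y1‖) ^ (-(2 + 2*γ + ε)) with hWdef
    set W0 : ℝ := (1 + ‖y1‖) ^ (-(2 + ε)) with hW0def
    set sx : ℝ := F0 ε (y1 - x) with hsxdef
    set ty : ℝ := F0 1 (y1 - y) with htydef
    set sx' : ℝ := F0 (ε*3) (y1 - x) with hsx'def
    set ty' : ℝ := F0 (1*(3/2)) (y1 - y) with hty'def
    have hQ1 : (1:ℝ) ≤ Q := Real.one_le_rpow (by linarith [norm_nonneg y1]) hγ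
    have hsx0 : 0 ≤ sx := F0_nonneg _ _
    have hty0 : 0 ≤ ty := F0_nonneg _ _
    have hsx'0 : 0 ≤ sx' := F0_nonneg _ _
    have hty'0 : 0 ≤ ty' := F0_nonneg _ _
    have hW : 0 ≤ W := Real.rpow_nonneg (by linarith [norm_nonneg y1]) _
    have hW0le1 : W0 ≤ 1 :=
      Real.rpow_le_one_of_one_le_of_nonpos (by linarith [norm_nonneg y1]) (by linarith)
    have hW00 : 0 ≤ W0 := Real.rpow_nonneg (by linarith [norm_nonneg y1]) _
    have t1 : ‖x - y1‖ ^ (-ε) ≤ 1 + sx := by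
      rw [norm_sub_rev]; exact kernel_le hε0 x y1
    have t2 : (1 + ‖x - y1‖) ^ γ ≤ Px * Q := by
      have hb : 1 + ‖x - y1‖ ≤ (1 + ‖x‖) * (1 + ‖y1‖) := by
        nlinarith [norm_sub_le x y1, norm_nonneg x, norm_nonneg y1]
      calc (1 + ‖x - y1‖) ^ γ ≤ ((1 + ‖x‖) * (1 + ‖y1‖)) ^ γ :=
            Real.rpow_le_rpow (by positivity) hb hγ
        _ = Px * Q := Real.mul_rpow (by positivity) (by positivity)
    have t3 : ‖y1 - y‖ ^ γ ≤ Q * Py := by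
      have hb : ‖y1 - y‖ ≤ (1 + ‖y1‖) * (1 + ‖y‖) := by
        nlinarith [norm_sub_le y1 y, norm_nonneg y1, norm_nonneg y]
      calc ‖y1 - y‖ ^ γ ≤ ((1 + ‖y1‖) * (1 + ‖y‖)) ^ γ :=
            Real.rpow_le_rpow (norm_nonneg _) hb hγ
        _ = Q * Py := Real.mul_rpow (by positivity) (by positivity)
    have t4 : ‖y1 - y‖ ^ (-(1:ℝ)) ≤ 1 + ty := kernel_le one_pos y y1
    have hPQ : (1:ℝ) ≤ Px * Q := by nlinarith
    have hPQ' : (1:ℝ) ≤ Py * Q := by nlinarith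
    have A1le : ‖x - y1‖ ^ (-ε) + (1 + ‖x - y1‖) ^ γ ≤ Px * Q * (2 + sx) := by
      nlinarith [t1, t2, mul_nonneg (sub_nonneg.mpr hPQ) (by linarith : (0:ℝ) ≤ 1 + sx)]
    have A3le : ‖y1 - y‖ ^ γ + ‖y1 - y‖ ^ (-(1:ℝ)) ≤ Py * Q * (2 + ty) := by
      nlinarith [t3, t4, mul_nonneg (sub_nonneg.mpr hPQ') (by linarith : (0:ℝ) ≤ 1 + ty)]
    have hA3nn : 0 ≤ ‖y1 - y‖ ^ γ + ‖y1 - y‖ ^ (-(1:ℝ)) := by positivity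
    have QQW : Q * Q * W = W0 := by
      rw [hQdef, hWdef, hW0def, ← Real.rpow_add (by linarith [norm_nonneg y1] : (0:ℝ) < 1 + ‖y1‖),
        ← Real.rpow_add (by linarith [norm_nonneg y1] : (0:ℝ) < 1 + ‖y1‖)]
      congr 1
      ring
    have hyoung : sx * ty ≤ sx' + ty' := by
      have h := young_aux hsx0 hty0
      rw [hsxdef, htydef, F0_rpow ε (by norm_num : (3:ℝ) ≠ 0),
        F0_rpow 1 (by norm_num : ((3:ℝ)/2) ≠ 0)] at h
      exact h
    have big : (‖x - y1‖ ^ (-ε) + (1 + ‖x - y1‖) ^ γ) * W *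
        (‖y1 - y‖ ^ γ + ‖y1 - y‖ ^ (-(1:ℝ)))
        ≤ (Px * Q * (2 + sx)) * W * (Py * Q * (2 + ty)) := by
      have m1 := mul_le_mul_of_nonneg_right (mul_le_mul_of_nonneg_right A1le hW) hA3nn
      have nn : 0 ≤ Px * Q * (2 + sx) * W :=
        mul_nonneg (mul_nonneg (by positivity) (by linarith)) hW
      exact m1.trans (mul_le_mul_of_nonneg_left A3le nn)
    have rearr : (Px * Q * (2 + sx)) * W * (Py * Q * (2 + ty))
        = Px * Py * ((Q * Q * W) * ((2 + sx) * (2 + ty))) := by ring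
    have inner : W0 * ((2 + sx) * (2 + ty)) ≤ 4*W0 + (2*sx + 2*ty + (sx' + ty')) := by
      have e : W0 * ((2 + sx) * (2 + ty)) = 4*W0 + W0 * (2*sx + 2*ty + sx*ty) := by ring
      have hnn : (0:ℝ) ≤ 2*sx + 2*ty + sx*ty := by nlinarith [mul_nonneg hsx0 hty0]
      have l1 : W0 * (2*sx + 2*ty + sx*ty) ≤ 1 * (2*sx + 2*ty + sx*ty) :=
        mul_le_mul_of_nonneg_right hW0le1 hnn
      have l2 : 2*sx + 2*ty + sx*ty ≤ 2*sx + 2*ty + (sx' + ty') := by linarith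
      linarith [e ▸ le_refl (W0 * ((2 + sx) * (2 + ty)))]
    calc (‖x - y1‖ ^ (-ε) + (1 + ‖x - y1‖) ^ γ) * W *
          (‖y1 - y‖ ^ γ + ‖y1 - y‖ ^ (-(1:ℝ)))
        ≤ (Px * Q * (2 + sx)) * W * (Py * Q * (2 + ty)) := big
      _ = Px * Py * (W0 * ((2 + sx) * (2 + ty))) := by rw [rearr, QQW]
      _ ≤ Px * Py * (4*W0 + (2*sx + 2*ty + (sx' + ty'))) :=
          mul_le_mul_of_nonneg_left inner (by positivity)
      _ = M y1 := by
          simp only [hMdef, hsxdef, htydef, hsx'def, hty'def, hW0def]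
          ring
  -- integral comparison
  have hmono : (∫ y1 : E2,
      (‖x - y1‖ ^ (-ε) + (1 + ‖x - y1‖) ^ γ) * (1 + ‖y1‖) ^ (-(2 + 2*γ + ε)) *
        (‖y1 - y‖ ^ γ + ‖y1 - y‖ ^ (-(1:ℝ)))) ≤ ∫ y1 : E2, M y1 := by
    apply integral_mono_of_nonneg
    · exact Filter.Eventually.of_forall fun y1 => by positivity
    · exact hM
    · exact Filter.Eventually.of_forall ptwise
  have hMint : (∫ y1 : E2, M y1) =
      (4*(∫ z : E2, (1 + ‖z‖) ^ (-(2 + ε))) + 2*(∫ z : E2, F0 ε z) + 2*(∫ z : E2, F0 1 z)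
        + (∫ z : E2, F0 (ε*3) z) + (∫ z : E2, F0 (1*(3/2)) z)) * Px * Py := by
    have eps1 : (∫ y1 : E2, F0 ε (y1 - x)) = ∫ z : E2, F0 ε z :=
      integral_sub_right_eq_self (F0 ε) x
    have e1 : (∫ y1 : E2, F0 1 (y1 - y)) = ∫ z : E2, F0 1 z :=
      integral_sub_right_eq_self (F0 1) y
    have eps3 : (∫ y1 : E2, F0 (ε*3) (y1 - x)) = ∫ z : E2, F0 (ε*3) z :=
      integral_sub_right_eq_self (F0 (ε*3)) x
    have e32 : (∫ y1 : E2, F0 (1*(3/2)) (y1 - y)) = ∫ z : E2, F0 (1*(3/2)) z :=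
      integral_sub_right_eq_self (F0 (1*(3/2))) y
    have I12 : Integrable (fun y1 : E2 =>
        4*(1 + ‖y1‖) ^ (-(2 + ε)) + 2*F0 ε (y1 - x)) volume :=
      (hG1.const_mul 4).add (hx1.const_mul 2)
    have I123 : Integrable (fun y1 : E2 =>
        4*(1 + ‖y1‖) ^ (-(2 + ε)) + 2*F0 ε (y1 - x) + 2*F0 1 (y1 - y)) volume :=
      I12.add (hy1i.const_mul 2)
    have I1234 : Integrable (fun y1 : E2 =>
        4*(1 + ‖y1‖) ^ (-(2 + ε)) + 2*F0 ε (y1 - x) + 2*F0 1 (y1 - y)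
          + F0 (ε*3) (y1 - x)) volume :=
      I123.add hx2
    simp only [hMdef]
    rw [integral_const_mul (Px * Py), integral_add I1234 hy2, integral_add I123 hx2,
      integral_add I12 (hy1i.const_mul 2), integral_add (hG1.const_mul 4) (hx1.const_mul 2),
      integral_const_mul (4:ℝ), integral_const_mul (2:ℝ), integral_const_mul (2:ℝ),
      eps1, e1, eps3, e32]
    ring
  exact hmono.trans (le_of_eq hMint)
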